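/- arXiv:2406.03286 — 2 statements merged into one kernel-verified Lean document; each statement's English description precedes it below -/
import Mathlib

section
/- Fix τ > 0 and μ ∈ (0,1]. Let x(·) be a solution of the linear balanced multiagent system driven by a signal A(·) ∈ G_{λ₂}(τ,μ) with V(x(0)) > 0. Then the variance decreases strictly over every time window of length τ: V(x(t+τ)) < V(x(t)) for all t ≥ 0. -/
open MeasureTheory Finset

noncomputable section

/-- Diameter of a configuration of `N` agents in `ℝ^d`. -/
def mDiam {N d : ℕ} (x : Fin N → EuclideanSpace ℝ (Fin d)) : ℝ :=
  ⨆ i : Fin N, ⨆ j : Fin N, ‖x i - x j‖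

/-- Variance of a configuration of `N` agents in `ℝ^d`. -/
def mVar {N d : ℕ} (x : Fin N → EuclideanSpace ℝ (Fin d)) : ℝ :=
  (N : ℝ)⁻¹ * ∑ i : Fin N, ‖x i - (N : ℝ)⁻¹ • ∑ k : Fin N, x k‖ ^ 2

/-- Admissible interaction signals: measurable, valued in `[0,1]` on `[0,∞)`. -/
def ValidSignal (N : ℕ) (a : Fin N → Fin N → ℝ → ℝ) : Prop :=
  ∀ i j, Measurable (a i j) ∧ ∀ t : ℝ, 0 ≤ t → a i j t ∈ Set.Icc (0 : ℝ) 1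

/-- Admissible kernels: locally Lipschitz and positive on `[0,∞)`. -/
def ValidKernel (φ : ℝ → ℝ) : Prop :=
  LocallyLipschitz φ ∧ ∀ r : ℝ, 0 ≤ r → 0 < φ r

/-- Solutions of the nonlinear multiagent system
`ẋ_i(t) = (1/N) ∑_j a_{ij}(t) φ(|x_i(t) − x_j(t)|)(x_j(t) − x_i(t))` for a.e. `t ≥ 0`,
as locally Lipschitz curves on `[0,∞)`. -/
def IsMASol {N d : ℕ} (a : Fin N → Fin N → ℝ → ℝ) (φ : ℝ → ℝ)
    (x : Fin N → ℝ → EuclideanSpace ℝ (Fin d)) : Prop :=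
  (∀ i, ∀ r : ℝ, 0 < r → ∃ K : NNReal, LipschitzOnWith K (x i) (Set.Icc 0 r)) ∧
  (∀ᵐ t ∂(volume : Measure ℝ), 0 ≤ t → ∀ i, HasDerivAt (x i)
    ((N : ℝ)⁻¹ • ∑ j : Fin N, (a i j t * φ ‖x i t - x j t‖) • (x j t - x i t)) t)

/-- The scrambling coefficient of an `N × N` matrix. -/
def scrambling {N : ℕ} (A : Fin N → Fin N → ℝ) : ℝ :=
  ⨅ i : Fin N, ⨅ j : Fin N, (N : ℝ)⁻¹ * ∑ k : Fin N, min (A i k) (A j k)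

/-- Scrambling-persistent signals: the scrambling coefficient of the averaged matrix
over every window `[t, t+τ]` is at least `μ`. -/
def ScramblingPersistent (N : ℕ) (τ μ : ℝ) (a : Fin N → Fin N → ℝ → ℝ) : Prop :=
  ValidSignal N a ∧
  ∀ t : ℝ, 0 ≤ t → μ ≤ scrambling (fun i j => τ⁻¹ * ∫ s in t..t + τ, a i j s)

/-- A matrix is balanced if its in- and out-degrees coincide. -/
def IsBalanced {N : ℕ} (A : Fin N → Fin N → ℝ) : Prop :=
  ∀ i, ∑ j : Fin N, A i j = ∑ j : Fin N, A j i

/-- The algebraic connectivity of a (balanced) matrix: the largest `λ` such that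
`(1/(2N²)) ∑_{ij} a_{ij} |x_i − x_j|² ≥ λ V(x)` for all configurations `x`. -/
def lambda2 (d : ℕ) {N : ℕ} (A : Fin N → Fin N → ℝ) : ℝ :=
  sSup {lam : ℝ | ∀ x : Fin N → EuclideanSpace ℝ (Fin d),
    lam * mVar x ≤ (2 * (N : ℝ) ^ 2)⁻¹ * ∑ i : Fin N, ∑ j : Fin N, A i j * ‖x i - x j‖ ^ 2}

/-- Connectivity-persistent balanced signals. -/
def ConnectivityPersistent (N d : ℕ) (τ μ : ℝ) (a : Fin N → Fin N → ℝ → ℝ) : Prop :=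
  ValidSignal N a ∧
  (∀ᵐ t ∂(volume : Measure ℝ), 0 ≤ t → IsBalanced (fun i j => a i j t)) ∧
  ∀ t : ℝ, 0 ≤ t → μ ≤ lambda2 d (fun i j => τ⁻¹ * ∫ s in t..t + τ, a i j s)

/-- Solutions of the linear multiagent system
`ẋ_i(t) = (1/N) ∑_j a_{ij}(t) (x_j(t) − x_i(t))` for a.e. `t ≥ 0`. -/
def IsLinSol {N d : ℕ} (a : Fin N → Fin N → ℝ → ℝ)
    (x : Fin N → ℝ → EuclideanSpace ℝ (Fin d)) : Prop :=
  (∀ i, ∀ r : ℝ, 0 < r → ∃ K : NNReal, LipschitzOnWith K (x i) (Set.Icc 0 r)) ∧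
  (∀ᵐ t ∂(volume : Measure ℝ), 0 ≤ t → ∀ i, HasDerivAt (x i)
    ((N : ℝ)⁻¹ • ∑ j : Fin N, a i j t • (x j t - x i t)) t)

open Set Filter intervalIntegral in
open scoped Topology in
/-- Fundamental theorem of calculus for Lipschitz functions with a.e. derivative. -/
theorem ftc_ae_aux {E : Type*} [NormedAddCommGroup E] [NormedSpace ℝ E] [CompleteSpace E]
    {f f' : ℝ → E} {a b : ℝ} (hab : a ≤ b) {K : NNReal}
    (hf : LipschitzOnWith K f (Set.Icc a (b + 1)))
    (hd : ∀ᵐ s ∂(volume : Measure ℝ), s ∈ Set.Ioo a b → HasDerivAt f (f' s) s) :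
    f b - f a = ∫ s in a..b, f' s := by
  set h : ℕ → ℝ := fun n => ((n : ℝ) + 1)⁻¹ with hh
  have hhpos : ∀ n : ℕ, 0 < h n := fun n => by positivity
  have hhle : ∀ n : ℕ, h n ≤ 1 := fun n => by
    rw [hh]
    exact inv_le_one_of_one_le₀ (by push_cast; linarith [Nat.cast_nonneg (α := ℝ) n])
  have hhmul : ∀ n : ℕ, ((n : ℝ) + 1) * h n = 1 := fun n => by
    rw [hh]; field_simp
  have hh0 : Filter.Tendsto h atTop (𝓝 0) := by
    have := tendsto_one_div_add_atTop_nhds_zero_nat (𝕜 := ℝ)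
    simpa [hh, one_div] using this
  have hfc : ContinuousOn f (Set.Icc a (b + 1)) := hf.continuousOn
  have hlip : ∀ u ∈ Set.Icc a (b + 1), ∀ w ∈ Set.Icc a (b + 1),
      ‖f u - f w‖ ≤ (K : ℝ) * |u - w| := by
    intro u hu w hw
    have := hf.dist_le_mul u hu w hw
    simpa [dist_eq_norm, Real.dist_eq] using this
  have hfint : ∀ c e : ℝ, c ∈ Set.Icc a (b + 1) → e ∈ Set.Icc a (b + 1) →
      IntervalIntegrable f volume c e := by
    intro c e hc he
    exact (hfc.mono (Set.uIcc_subset_Icc hc he)).intervalIntegrable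
  have memIcc : ∀ {u : ℝ}, u ∈ Set.Icc a b → ∀ n : ℕ, u + h n ∈ Set.Icc a (b + 1) := by
    intro u hu n
    constructor
    · linarith [hu.1, (hhpos n).le]
    · linarith [hu.2, hhle n]
  have memIcc' : Set.Icc a b ⊆ Set.Icc a (b + 1) := Set.Icc_subset_Icc le_rfl (by linarith)
  -- Step 1: the integral identity
  have step1 : ∀ n : ℕ, (∫ s in a..b, ((n : ℝ) + 1) • (f (s + h n) - f s))
      = ((n : ℝ) + 1) • ((∫ s in b..b + h n, f s) - ∫ s in a..a + h n, f s) := by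
    intro n
    rw [intervalIntegral.integral_smul]
    congr 1
    have h1 : IntervalIntegrable (fun s => f (s + h n)) volume a b := by
      apply ContinuousOn.intervalIntegrable
      have hc : ContinuousOn (fun s : ℝ => s + h n) (Set.uIcc a b) := by fun_prop
      apply hfc.comp hc
      intro u hu
      rw [Set.uIcc_of_le hab] at hu
      exact memIcc hu n
    rw [intervalIntegral.integral_sub h1 (hfint a b (memIcc' ⟨le_rfl, hab⟩) (memIcc' ⟨hab, le_rfl⟩))]
    rw [intervalIntegral.integral_comp_add_right]
    have chas1 : (∫ s in a + h n..b + h n, f s) =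
        (∫ s in a + h n..b, f s) + ∫ s in b..b + h n, f s := by
      rw [intervalIntegral.integral_add_adjacent_intervals] <;>
        apply hfint <;>
        first
          | exact memIcc ⟨le_rfl, hab⟩ n
          | exact memIcc ⟨hab, le_rfl⟩ n
          | exact memIcc' ⟨le_rfl, hab⟩
          | exact memIcc' ⟨hab, le_rfl⟩
    have chas2 : (∫ s in a..b, f s) =
        (∫ s in a..a + h n, f s) + ∫ s in a + h n..b, f s := by
      rw [intervalIntegral.integral_add_adjacent_intervals] <;>
        apply hfint <;>
        first
          | exact memIcc ⟨le_rfl, hab⟩ n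
          | exact memIcc ⟨hab, le_rfl⟩ n
          | exact memIcc' ⟨le_rfl, hab⟩
          | exact memIcc' ⟨hab, le_rfl⟩
    rw [chas1, chas2]
    abel
  -- Step 2 : endpoint limits
  have step2 : ∀ c : ℝ, c ∈ Set.Icc a b →
      Filter.Tendsto (fun n : ℕ => ((n : ℝ) + 1) • ∫ s in c..c + h n, f s) atTop (𝓝 (f c)) := by
    intro c hc
    have key : ∀ n : ℕ, ‖((n : ℝ) + 1) • (∫ s in c..c + h n, f s) - f c‖ ≤ (K : ℝ) * h n := by
      intro n
      have e1 : (∫ s in c..c + h n, (f s - f c)) =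
          (∫ s in c..c + h n, f s) - (h n) • f c := by
        rw [intervalIntegral.integral_sub (hfint c (c + h n) (memIcc' hc) (memIcc hc n))
          intervalIntegrable_const, intervalIntegral.integral_const]
        simp
      have e2 : ((n : ℝ) + 1) • (∫ s in c..c + h n, f s) - f c
          = ((n : ℝ) + 1) • ∫ s in c..c + h n, (f s - f c) := by
        rw [e1, smul_sub, smul_smul, hhmul n, one_smul]
      rw [e2, norm_smul]
      have bnd : ‖∫ s in c..c + h n, (f s - f c)‖ ≤ ((K : ℝ) * h n) * |c + h n - c| := by
        apply intervalIntegral.norm_integral_le_of_norm_le_const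
        intro u hu
        rw [Set.uIoc_of_le (by linarith [hhpos n])] at hu
        have hu1 : u ∈ Set.Icc a (b + 1) := by
          constructor
          · linarith [hu.1.le, hc.1]
          · linarith [hu.2, hc.2, hhle n]
        calc ‖f u - f c‖ ≤ (K : ℝ) * |u - c| := hlip u hu1 c (memIcc' hc)
        _ ≤ (K : ℝ) * h n := by
            apply mul_le_mul_of_nonneg_left _ (NNReal.coe_nonneg K)
            rw [abs_of_nonneg (by linarith [hu.1.le])]
            linarith [hu.2]
      have habs : |c + h n - c| = h n := by
        rw [add_sub_cancel_left, abs_of_pos (hhpos n)]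
      rw [habs] at bnd
      calc ‖((n : ℝ) + 1)‖ * ‖∫ s in c..c + h n, (f s - f c)‖
          ≤ ‖((n : ℝ) + 1)‖ * (((K : ℝ) * h n) * h n) := by
            apply mul_le_mul_of_nonneg_left bnd (norm_nonneg _)
        _ = (K : ℝ) * h n := by
            rw [Real.norm_eq_abs, abs_of_pos (by positivity)]
            calc ((n : ℝ) + 1) * (((K : ℝ) * h n) * h n)
                = (((n : ℝ) + 1) * h n) * ((K : ℝ) * h n) := by ring
              _ = (K : ℝ) * h n := by rw [hhmul n, one_mul]
    have hK0 : Filter.Tendsto (fun n : ℕ => (K : ℝ) * h n) atTop (𝓝 0) := by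
      simpa using hh0.const_mul (K : ℝ)
    have := (squeeze_zero_norm key hK0).add_const (f c)
    simpa using this
  -- Step 3 : DCT
  have step3 : Filter.Tendsto (fun n : ℕ => ∫ s in a..b, ((n : ℝ) + 1) • (f (s + h n) - f s))
      atTop (𝓝 (∫ s in a..b, f' s)) := by
    apply intervalIntegral.tendsto_integral_filter_of_dominated_convergence (fun _ => (K : ℝ))
    · apply Filter.Eventually.of_forall
      intro n
      apply ContinuousOn.aestronglyMeasurable _ measurableSet_uIoc
      apply ContinuousOn.smul continuousOn_const
      apply ContinuousOn.sub
      · have hc : ContinuousOn (fun s : ℝ => s + h n) (Set.uIoc a b) := by fun_prop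
        apply hfc.comp hc
        intro u hu
        rw [Set.uIoc_of_le hab] at hu
        exact memIcc ⟨hu.1.le, hu.2⟩ n
      · apply hfc.mono
        rw [Set.uIoc_of_le hab]
        exact fun u hu => memIcc' ⟨hu.1.le, hu.2⟩
    · apply Filter.Eventually.of_forall
      intro n
      apply Filter.Eventually.of_forall
      intro u hu
      rw [Set.uIoc_of_le hab] at hu
      rw [norm_smul]
      have h1 : ‖f (u + h n) - f u‖ ≤ (K : ℝ) * h n := by
        have := hlip (u + h n) (memIcc ⟨hu.1.le, hu.2⟩ n) u (memIcc' ⟨hu.1.le, hu.2⟩)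
        rw [add_sub_cancel_left, abs_of_pos (hhpos n)] at this
        exact this
      calc ‖((n : ℝ) + 1)‖ * ‖f (u + h n) - f u‖ ≤ ‖((n : ℝ) + 1)‖ * ((K : ℝ) * h n) :=
          mul_le_mul_of_nonneg_left h1 (norm_nonneg _)
        _ = (K : ℝ) := by
            rw [Real.norm_eq_abs, abs_of_pos (by positivity)]
            calc ((n : ℝ) + 1) * ((K : ℝ) * h n) = (((n : ℝ) + 1) * h n) * (K : ℝ) := by ring
              _ = (K : ℝ) := by rw [hhmul n, one_mul]
    · exact intervalIntegrable_const
    · have hbne : ∀ᵐ s : ℝ ∂volume, s ≠ b := by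
        rw [MeasureTheory.ae_iff]
        simpa using measure_singleton (μ := (volume : Measure ℝ)) b
      filter_upwards [hd, hbne] with u hu hub hmem
      rw [Set.uIoc_of_le hab] at hmem
      have huoo : u ∈ Set.Ioo a b := ⟨hmem.1, lt_of_le_of_ne hmem.2 hub⟩
      have hder := hu huoo
      rw [hasDerivAt_iff_tendsto_slope] at hder
      have hseq : Filter.Tendsto (fun n : ℕ => u + h n) atTop (𝓝[≠] u) := by
        rw [tendsto_nhdsWithin_iff]
        constructor
        · simpa using (tendsto_const_nhds (x := u)).add hh0
        · apply Filter.Eventually.of_forall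
          intro n
          simpa using (hhpos n).ne'
      have hcomp := hder.comp hseq
      convert hcomp using 2 with n
      simp only [Function.comp_apply, slope_def_module]
      rw [add_sub_cancel_left, hh]
      simp
  -- conclude
  have lhs_lim : Filter.Tendsto (fun n : ℕ => ∫ s in a..b, ((n : ℝ) + 1) • (f (s + h n) - f s))
      atTop (𝓝 (f b - f a)) := by
    simp only [step1]
    have hb := step2 b ⟨hab, le_rfl⟩
    have ha' := step2 a ⟨le_rfl, hab⟩
    have := hb.sub ha'
    convert this using 2 with n
    rw [smul_sub]
  exact tendsto_nhds_unique lhs_lim step3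


/-- Integrability of bounded a.e.-strongly measurable functions on intervals. -/
theorem intervalIntegrable_of_bdd {E : Type*} [NormedAddCommGroup E]
    {f : ℝ → E} {t₁ t₂ C : ℝ} (h12 : t₁ ≤ t₂)
    (hm : MeasureTheory.AEStronglyMeasurable f
      ((MeasureTheory.volume : MeasureTheory.Measure ℝ).restrict (Set.Ioc t₁ t₂)))
    (hC : ∀ s ∈ Set.Ioc t₁ t₂, ‖f s‖ ≤ C) :
    IntervalIntegrable f MeasureTheory.volume t₁ t₂ := by
  rw [intervalIntegrable_iff_integrableOn_Ioc_of_le h12]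
  exact MeasureTheory.Integrable.mono'
    (MeasureTheory.integrableOn_const (C := C) measure_Ioc_lt_top.ne) hm
    ((MeasureTheory.ae_restrict_iff' measurableSet_Ioc).2 (Filter.Eventually.of_forall hC))

/-- Swapping a balanced double sum. -/
theorem balanced_sum_swap {N : ℕ} {A : Fin N → Fin N → ℝ} (hA : IsBalanced A)
    {M : Type*} [AddCommMonoid M] [Module ℝ M] (c : Fin N → M) :
    ∑ i : Fin N, ∑ j : Fin N, A i j • c j = ∑ i : Fin N, ∑ j : Fin N, A i j • c i := by
  calc ∑ i : Fin N, ∑ j : Fin N, A i j • c j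
      = ∑ j : Fin N, ∑ i : Fin N, A i j • c j := Finset.sum_comm
    _ = ∑ j : Fin N, (∑ i : Fin N, A i j) • c j := by
        refine Finset.sum_congr rfl fun j _ => ?_
        rw [Finset.sum_smul]
    _ = ∑ j : Fin N, (∑ i : Fin N, A j i) • c j := by
        refine Finset.sum_congr rfl fun j _ => ?_
        rw [← hA j]
    _ = ∑ j : Fin N, ∑ i : Fin N, A j i • c j := by
        refine Finset.sum_congr rfl fun j _ => ?_
        rw [Finset.sum_smul]

open scoped RealInnerProductSpace in
open Set Filter in
set_option maxHeartbeats 2000000 in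
/-- strict variance decay under connectivity persistence: if the initial
variance is positive, the variance decreases strictly over every window of length `τ`. -/
theorem strict_variance_decay_connectivity {N d : ℕ} (hN : 1 ≤ N)
    (τ μ : ℝ) (hτ : 0 < τ) (hμ : μ ∈ Set.Ioc (0 : ℝ) 1)
    (a : Fin N → Fin N → ℝ → ℝ) (ha : ConnectivityPersistent N d τ μ a)
    (x : Fin N → ℝ → EuclideanSpace ℝ (Fin d)) (hx : IsLinSol a x)
    (hV0 : 0 < mVar (fun i => x i 0)) :
    ∀ t : ℝ, 0 ≤ t → mVar (fun i => x i (t + τ)) < mVar (fun i => x i t) := by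
  obtain ⟨hvalid, hbal, hlam⟩ := ha
  obtain ⟨hLip, hdx⟩ := hx
  have hNpos : (0 : ℝ) < N := by exact_mod_cast hN
  have hNinv : (0 : ℝ) < (N : ℝ)⁻¹ := by positivity
  have hameas : ∀ i j, Measurable (a i j) := fun i j => (hvalid i j).1
  have ha0 : ∀ i j (s : ℝ), 0 ≤ s → 0 ≤ a i j s := fun i j s hs => ((hvalid i j).2 s hs).1
  have ha1 : ∀ i j (s : ℝ), 0 ≤ s → a i j s ≤ 1 := fun i j s hs => ((hvalid i j).2 s hs).2
  set xb : EuclideanSpace ℝ (Fin d) := (N : ℝ)⁻¹ • ∑ k : Fin N, x k 0 with hxb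
  set v : Fin N → ℝ → EuclideanSpace ℝ (Fin d) :=
    fun i s => (N : ℝ)⁻¹ • ∑ j : Fin N, a i j s • (x j s - x i s) with hv
  set D : ℝ → ℝ :=
    fun s => (N : ℝ)⁻¹ * ∑ i : Fin N, ∑ j : Fin N, a i j s * ‖x i s - x j s‖ ^ 2 with hD
  set W : ℝ → ℝ := fun s => ∑ i : Fin N, ‖x i s - xb‖ ^ 2 with hW
  -- continuity of solutions
  have hcont : ∀ i (r : ℝ), 0 < r → ContinuousOn (x i) (Set.Icc 0 r) :=
    fun i r hr => ((hLip i r hr).choose_spec).continuousOn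
  -- uniform bound on compacts
  have hbd : ∀ r : ℝ, 0 < r → ∃ C : ℝ, 0 ≤ C ∧ ∀ i, ∀ s ∈ Set.Icc (0 : ℝ) r, ‖x i s‖ ≤ C := by
    intro r hr
    have h := fun i => (isCompact_Icc (a := (0:ℝ)) (b := r)).exists_bound_of_continuousOn
      (hcont i r hr)
    choose C hC using h
    refine ⟨∑ i, |C i|, Finset.sum_nonneg fun i _ => abs_nonneg _, fun i s hs => ?_⟩
    refine le_trans (hC i s hs) (le_trans (le_abs_self _) ?_)
    exact Finset.single_le_sum (f := fun i => |C i|) (fun j _ => abs_nonneg _) (Finset.mem_univ i)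
  -- measurability of v
  have hvmeas : ∀ i (t₁ t₂ : ℝ), 0 ≤ t₁ → 0 < t₂ →
      MeasureTheory.AEStronglyMeasurable (v i)
        ((MeasureTheory.volume : MeasureTheory.Measure ℝ).restrict (Set.Ioc t₁ t₂)) := by
    intro i t₁ t₂ h1 h2
    have hsub : Set.Ioc t₁ t₂ ⊆ Set.Icc 0 t₂ := fun s hs => ⟨le_trans h1 hs.1.le, hs.2⟩
    have hmono : (MeasureTheory.volume : MeasureTheory.Measure ℝ).restrict (Set.Ioc t₁ t₂)
        ≤ (MeasureTheory.volume : MeasureTheory.Measure ℝ).restrict (Set.Icc 0 t₂) :=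
      MeasureTheory.Measure.restrict_mono hsub le_rfl
    refine MeasureTheory.AEStronglyMeasurable.fun_const_smul ?_ _
    refine Finset.aestronglyMeasurable_fun_sum _ fun j _ => ?_
    refine MeasureTheory.AEStronglyMeasurable.smul ((hameas i j).aestronglyMeasurable.restrict) ?_
    exact (((hcont j t₂ h2).sub (hcont i t₂ h2)).aestronglyMeasurable
      measurableSet_Icc).mono_measure hmono
  -- integrability of v
  have hvint : ∀ i (t₁ t₂ : ℝ), 0 ≤ t₁ → t₁ ≤ t₂ →
      IntervalIntegrable (v i) MeasureTheory.volume t₁ t₂ := by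
    intro i t₁ t₂ h1 h12
    rcases eq_or_lt_of_le h12 with rfl | h12'
    · exact IntervalIntegrable.refl
    have h2 : 0 < t₂ := lt_of_le_of_lt h1 h12'
    obtain ⟨C, hC0, hC⟩ := hbd t₂ h2
    refine intervalIntegrable_of_bdd (C := (N : ℝ) * (2 * C)) h12 (hvmeas i t₁ t₂ h1 h2) ?_
    intro s hs
    have hsmem : s ∈ Set.Icc (0:ℝ) t₂ := ⟨le_trans h1 hs.1.le, hs.2⟩
    have hs0 : (0:ℝ) ≤ s := hsmem.1
    have hNinv1 : (N : ℝ)⁻¹ ≤ 1 := by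
      rw [inv_le_one_iff₀]; right; exact_mod_cast hN
    calc ‖v i s‖ = ‖(N : ℝ)⁻¹‖ * ‖∑ j : Fin N, a i j s • (x j s - x i s)‖ := by
          rw [hv]; exact norm_smul _ _
      _ ≤ 1 * ‖∑ j : Fin N, a i j s • (x j s - x i s)‖ := by
          apply mul_le_mul_of_nonneg_right _ (norm_nonneg _)
          rw [Real.norm_eq_abs, abs_of_pos hNinv]; exact hNinv1
      _ = ‖∑ j : Fin N, a i j s • (x j s - x i s)‖ := one_mul _
      _ ≤ ∑ j : Fin N, ‖a i j s • (x j s - x i s)‖ := norm_sum_le _ _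
      _ ≤ ∑ _j : Fin N, (2 * C) := by
          refine Finset.sum_le_sum fun j _ => ?_
          rw [norm_smul, Real.norm_eq_abs, abs_of_nonneg (ha0 _ _ _ hs0)]
          have hle1 := ha1 i j s hs0
          have hsub2 : ‖x j s - x i s‖ ≤ 2 * C :=
            le_trans (norm_sub_le _ _) (by linarith [hC j s hsmem, hC i s hsmem])
          calc a i j s * ‖x j s - x i s‖ ≤ 1 * (2 * C) :=
              mul_le_mul hle1 hsub2 (norm_nonneg _) one_pos.le
            _ = 2 * C := one_mul _
      _ = (N : ℝ) * (2 * C) := by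
          rw [Finset.sum_const, Finset.card_univ, Fintype.card_fin, nsmul_eq_mul]
  -- FTC for x
  have hFTCx : ∀ i (t₁ t₂ : ℝ), 0 ≤ t₁ → t₁ ≤ t₂ →
      x i t₂ - x i t₁ = ∫ s in t₁..t₂, v i s := by
    intro i t₁ t₂ h1 h12
    have h2p : (0:ℝ) < t₂ + 1 := by linarith
    obtain ⟨K, hK⟩ := hLip i (t₂ + 1) h2p
    refine ftc_ae_aux h12 (K := K) (hK.mono (Set.Icc_subset_Icc h1 le_rfl)) ?_
    filter_upwards [hdx] with s hs hsmem
    have hs0 : (0:ℝ) ≤ s := le_trans h1 hsmem.1.le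
    exact hs hs0 i
  -- the mean is constant
  have hmean : ∀ t : ℝ, 0 ≤ t → ∑ k : Fin N, x k t = ∑ k : Fin N, x k 0 := by
    intro t ht
    have key : ∑ k : Fin N, (x k t - x k 0) = ∫ s in (0:ℝ)..t, (∑ k : Fin N, v k s) := by
      rw [intervalIntegral.integral_finset_sum (fun k _ => hvint k 0 t le_rfl ht)]
      exact Finset.sum_congr rfl fun k _ => hFTCx k 0 t le_rfl ht
    have hzero : (∫ s in (0:ℝ)..t, (∑ k : Fin N, v k s)) = 0 := by
      have hae : ∀ᵐ s ∂(MeasureTheory.volume : MeasureTheory.Measure ℝ), s ∈ Set.uIoc (0:ℝ) t →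
          (∑ k : Fin N, v k s) = (fun _ : ℝ => (0 : EuclideanSpace ℝ (Fin d))) s := by
        filter_upwards [hbal] with s hbs hsmem
        rw [Set.uIoc_of_le ht] at hsmem
        have hb := hbs hsmem.1.le
        simp only [hv]
        rw [← Finset.smul_sum]
        have hz : ∑ k : Fin N, ∑ j : Fin N, a k j s • (x j s - x k s) = 0 := by
          have hswap := balanced_sum_swap hb (fun k => x k s)
          simp only [smul_sub, Finset.sum_sub_distrib]
          rw [sub_eq_zero]
          exact hswap
        rw [hz, smul_zero]
      rw [intervalIntegral.integral_congr_ae hae, intervalIntegral.integral_zero]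
    have hfin := key.trans hzero
    rw [Finset.sum_sub_distrib, sub_eq_zero] at hfin
    exact hfin
  -- variance vs W
  have hmVarW : ∀ t : ℝ, 0 ≤ t → mVar (fun i => x i t) = (N : ℝ)⁻¹ * W t := by
    intro t ht
    simp only [mVar, hW]
    rw [hmean t ht, ← hxb]
  -- a.e. derivative of W
  have haeW : ∀ᵐ s ∂(MeasureTheory.volume : MeasureTheory.Measure ℝ),
      0 < s → HasDerivAt W (-D s) s := by
    filter_upwards [hdx, hbal] with s hds hbs hs0
    have hb := hbs hs0.le
    set p : Fin N → EuclideanSpace ℝ (Fin d) := fun i => x i s - xb with hp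
    have hder : ∀ i : Fin N, HasDerivAt (fun u => ‖x i u - xb‖ ^ 2)
        (⟪x i s - xb, v i s⟫ + ⟪v i s, x i s - xb⟫) s := by
      intro i
      have hgi : HasDerivAt (fun u => x i u - xb) (v i s) s := (hds hs0.le i).sub_const xb
      have h2 := hgi.inner ℝ hgi
      have heq : (fun u => ‖x i u - xb‖ ^ 2)
          = fun u => ⟪x i u - xb, x i u - xb⟫ := by
        funext u; rw [real_inner_self_eq_norm_sq]
      rw [heq]; exact h2
    have hsum := HasDerivAt.fun_sum (u := Finset.univ) (fun i _ => hder i)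
    have hval : ∑ i : Fin N, (⟪x i s - xb, v i s⟫ + ⟪v i s, x i s - xb⟫) = -D s := by
      have hpd : ∀ i, p i = x i s - xb := fun i => by rw [hp]
      have hps : ∀ i j : Fin N, p j - p i = x j s - x i s := fun i j => by
        rw [hpd j, hpd i, sub_sub_sub_cancel_right]
      have hvp : ∀ i, v i s = (N : ℝ)⁻¹ • ∑ j : Fin N, a i j s • (p j - p i) := by
        intro i
        simp only [hps]
        rfl
      have hinner : ∀ i, ⟪p i, v i s⟫
          = (N : ℝ)⁻¹ * ∑ j : Fin N, a i j s * ⟪p i, p j - p i⟫ := by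
        intro i
        rw [hvp i, real_inner_smul_right, inner_sum]
        congr 1
        refine Finset.sum_congr rfl fun j _ => ?_
        rw [real_inner_smul_right]
      have hswap := balanced_sum_swap hb (fun i => ‖p i‖ ^ 2)
      simp only [smul_eq_mul] at hswap
      have e1 : ∑ i : Fin N, ∑ j : Fin N, a i j s * ⟪p i, p j - p i⟫
          = (∑ i : Fin N, ∑ j : Fin N, a i j s * ⟪p i, p j⟫)
            - ∑ i : Fin N, ∑ j : Fin N, a i j s * ‖p i‖ ^ 2 := by
        have hterm : ∀ i j : Fin N, a i j s * ⟪p i, p j - p i⟫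
            = a i j s * ⟪p i, p j⟫ - a i j s * ‖p i‖ ^ 2 := by
          intro i j; rw [inner_sub_right, real_inner_self_eq_norm_sq]; ring
        simp only [hterm, Finset.sum_sub_distrib]
      have e2 : ∑ i : Fin N, ∑ j : Fin N, a i j s * ‖p i - p j‖ ^ 2
          = (∑ i : Fin N, ∑ j : Fin N, a i j s * ‖p i‖ ^ 2)
            - 2 * (∑ i : Fin N, ∑ j : Fin N, a i j s * ⟪p i, p j⟫)
            + ∑ i : Fin N, ∑ j : Fin N, a i j s * ‖p j‖ ^ 2 := by
        have hterm : ∀ i j : Fin N, a i j s * ‖p i - p j‖ ^ 2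
            = (a i j s * ‖p i‖ ^ 2 - 2 * (a i j s * ⟪p i, p j⟫)) + a i j s * ‖p j‖ ^ 2 := by
          intro i j; rw [norm_sub_sq_real]; ring
        simp only [hterm, Finset.sum_add_distrib, Finset.sum_sub_distrib, ← Finset.mul_sum]
      have hinner2 : ∀ i, ⟪v i s, p i⟫
          = (N : ℝ)⁻¹ * ∑ j : Fin N, a i j s * ⟪p i, p j - p i⟫ := by
        intro i
        rw [real_inner_comm (p i) (v i s)]
        exact hinner i
      calc ∑ i : Fin N, (⟪p i, v i s⟫ + ⟪v i s, p i⟫)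
          = ∑ i : Fin N, 2 * ((N : ℝ)⁻¹ * ∑ j : Fin N, a i j s * ⟪p i, p j - p i⟫) := by
            refine Finset.sum_congr rfl fun i _ => ?_
            rw [hinner i, hinner2 i]; ring
        _ = 2 * (N : ℝ)⁻¹ * ∑ i : Fin N, ∑ j : Fin N, a i j s * ⟪p i, p j - p i⟫ := by
            rw [Finset.mul_sum]
            refine Finset.sum_congr rfl fun i _ => ?_
            ring
        _ = -((N : ℝ)⁻¹ * ∑ i : Fin N, ∑ j : Fin N, a i j s * ‖p i - p j‖ ^ 2) := by
            rw [e1, e2]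
            linear_combination ((N : ℝ)⁻¹) * hswap
        _ = -D s := by
            have hps2 : ∀ i j : Fin N, p i - p j = x i s - x j s := fun i j => by
              rw [hpd i, hpd j, sub_sub_sub_cancel_right]
            simp only [hps2]
            rfl
    rw [hW]
    rw [← hval]
    exact hsum
  -- D is nonnegative
  have hDnn : ∀ s : ℝ, 0 ≤ s → 0 ≤ D s := by
    intro s hs
    rw [hD]
    refine mul_nonneg hNinv.le (Finset.sum_nonneg fun i _ => Finset.sum_nonneg fun j _ => ?_)
    exact mul_nonneg (ha0 i j s hs) (by positivity)
  -- D is dominated by 4 W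
  have hD4W : ∀ s : ℝ, 0 ≤ s → D s ≤ 4 * W s := by
    intro s hs
    rw [hD, hW]
    have hterm : ∀ i j : Fin N, a i j s * ‖x i s - x j s‖ ^ 2
        ≤ 2 * ‖x i s - xb‖ ^ 2 + 2 * ‖x j s - xb‖ ^ 2 := by
      intro i j
      have hsplit : x i s - x j s = (x i s - xb) - (x j s - xb) := by
        rw [sub_sub_sub_cancel_right]
      have h1 : ‖x i s - x j s‖ ≤ ‖x i s - xb‖ + ‖x j s - xb‖ := by
        rw [hsplit]; exact norm_sub_le _ _
      have h2 : ‖x i s - x j s‖ ^ 2 ≤ 2 * ‖x i s - xb‖ ^ 2 + 2 * ‖x j s - xb‖ ^ 2 := by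
        nlinarith [h1, sq_nonneg (‖x i s - xb‖ - ‖x j s - xb‖), norm_nonneg (x i s - x j s),
          norm_nonneg (x i s - xb), norm_nonneg (x j s - xb)]
      calc a i j s * ‖x i s - x j s‖ ^ 2 ≤ 1 * ‖x i s - x j s‖ ^ 2 :=
          mul_le_mul_of_nonneg_right (ha1 i j s hs) (by positivity)
        _ = ‖x i s - x j s‖ ^ 2 := one_mul _
        _ ≤ 2 * ‖x i s - xb‖ ^ 2 + 2 * ‖x j s - xb‖ ^ 2 := h2
    have hsum : ∑ i : Fin N, ∑ j : Fin N, (2 * ‖x i s - xb‖ ^ 2 + 2 * ‖x j s - xb‖ ^ 2)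
        = (N : ℝ) * (4 * ∑ i : Fin N, ‖x i s - xb‖ ^ 2) := by
      simp only [Finset.sum_add_distrib, ← Finset.mul_sum, Finset.sum_const, Finset.card_univ,
        Fintype.card_fin, nsmul_eq_mul]
      ring
    calc (N : ℝ)⁻¹ * ∑ i : Fin N, ∑ j : Fin N, a i j s * ‖x i s - x j s‖ ^ 2
        ≤ (N : ℝ)⁻¹ * ∑ i : Fin N, ∑ j : Fin N, (2 * ‖x i s - xb‖ ^ 2 + 2 * ‖x j s - xb‖ ^ 2) := by
          refine mul_le_mul_of_nonneg_left ?_ hNinv.le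
          exact Finset.sum_le_sum fun i _ => Finset.sum_le_sum fun j _ => hterm i j
      _ = (N : ℝ)⁻¹ * ((N : ℝ) * (4 * ∑ i : Fin N, ‖x i s - xb‖ ^ 2)) := by rw [hsum]
      _ = 4 * ∑ i : Fin N, ‖x i s - xb‖ ^ 2 := by
          rw [← mul_assoc, inv_mul_cancel₀ (ne_of_gt hNpos), one_mul]
  -- measurability and integrability of D
  have hDint : ∀ t₁ t₂ : ℝ, 0 ≤ t₁ → t₁ ≤ t₂ →
      IntervalIntegrable D MeasureTheory.volume t₁ t₂ := by
    intro t₁ t₂ h1 h12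
    rcases eq_or_lt_of_le h12 with rfl | h12'
    · exact IntervalIntegrable.refl
    have h2 : 0 < t₂ := lt_of_le_of_lt h1 h12'
    obtain ⟨C, hC0, hC⟩ := hbd t₂ h2
    have hsub : Set.Ioc t₁ t₂ ⊆ Set.Icc 0 t₂ := fun s hs => ⟨le_trans h1 hs.1.le, hs.2⟩
    have hmono : (MeasureTheory.volume : MeasureTheory.Measure ℝ).restrict (Set.Ioc t₁ t₂)
        ≤ (MeasureTheory.volume : MeasureTheory.Measure ℝ).restrict (Set.Icc 0 t₂) :=
      MeasureTheory.Measure.restrict_mono hsub le_rfl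
    refine intervalIntegrable_of_bdd (C := (N : ℝ) * ((N : ℝ) * ((N : ℝ) * (2 * C) ^ 2))) h12 ?_ ?_
    · rw [hD]
      refine MeasureTheory.AEStronglyMeasurable.const_mul ?_ _
      refine Finset.aestronglyMeasurable_fun_sum _ fun i _ => ?_
      refine Finset.aestronglyMeasurable_fun_sum _ fun j _ => ?_
      refine MeasureTheory.AEStronglyMeasurable.mul
        ((hameas i j).aestronglyMeasurable.restrict) ?_
      have hcn : ContinuousOn (fun s => ‖x i s - x j s‖ ^ 2) (Set.Icc 0 t₂) :=
        (((hcont i t₂ h2).sub (hcont j t₂ h2)).norm).pow 2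
      exact (hcn.aestronglyMeasurable measurableSet_Icc).mono_measure hmono
    · intro s hs
      have hsmem : s ∈ Set.Icc (0:ℝ) t₂ := hsub hs
      have hs0 : (0:ℝ) ≤ s := hsmem.1
      rw [Real.norm_eq_abs, abs_of_nonneg (hDnn s hs0), hD]
      have hNinv1 : (N : ℝ)⁻¹ ≤ 1 := by
        rw [inv_le_one_iff₀]; right; exact_mod_cast hN
      have hterm : ∀ i j : Fin N, a i j s * ‖x i s - x j s‖ ^ 2 ≤ (2 * C) ^ 2 := by
        intro i j
        have hsubnorm : ‖x i s - x j s‖ ≤ 2 * C :=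
          le_trans (norm_sub_le _ _) (by linarith [hC i s hsmem, hC j s hsmem])
        have hq : ‖x i s - x j s‖ ^ 2 ≤ (2 * C) ^ 2 := by
          nlinarith [norm_nonneg (x i s - x j s)]
        calc a i j s * ‖x i s - x j s‖ ^ 2 ≤ 1 * (2 * C) ^ 2 :=
            mul_le_mul (ha1 i j s hs0) hq (by positivity) one_pos.le
          _ = (2 * C) ^ 2 := one_mul _
      have hS : ∑ i : Fin N, ∑ j : Fin N, a i j s * ‖x i s - x j s‖ ^ 2
          ≤ (N : ℝ) * ((N : ℝ) * (2 * C) ^ 2) := by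
        calc ∑ i : Fin N, ∑ j : Fin N, a i j s * ‖x i s - x j s‖ ^ 2
            ≤ ∑ _i : Fin N, ((N : ℝ) * (2 * C) ^ 2) := by
              refine Finset.sum_le_sum fun i _ => ?_
              calc ∑ j : Fin N, a i j s * ‖x i s - x j s‖ ^ 2
                  ≤ ∑ _j : Fin N, (2 * C) ^ 2 :=
                    Finset.sum_le_sum fun j _ => hterm i j
                _ = (N : ℝ) * (2 * C) ^ 2 := by
                    rw [Finset.sum_const, Finset.card_univ, Fintype.card_fin, nsmul_eq_mul]
          _ = (N : ℝ) * ((N : ℝ) * (2 * C) ^ 2) := by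
              rw [Finset.sum_const, Finset.card_univ, Fintype.card_fin, nsmul_eq_mul]
      have hSnn : 0 ≤ ∑ i : Fin N, ∑ j : Fin N, a i j s * ‖x i s - x j s‖ ^ 2 :=
        Finset.sum_nonneg fun i _ => Finset.sum_nonneg fun j _ =>
          mul_nonneg (ha0 i j s hs0) (by positivity)
      calc (N : ℝ)⁻¹ * ∑ i : Fin N, ∑ j : Fin N, a i j s * ‖x i s - x j s‖ ^ 2
          ≤ 1 * ∑ i : Fin N, ∑ j : Fin N, a i j s * ‖x i s - x j s‖ ^ 2 :=
            mul_le_mul_of_nonneg_right hNinv1 hSnn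
        _ = ∑ i : Fin N, ∑ j : Fin N, a i j s * ‖x i s - x j s‖ ^ 2 := one_mul _
        _ ≤ (N : ℝ) * ((N : ℝ) * (2 * C) ^ 2) := hS
        _ ≤ (N : ℝ) * ((N : ℝ) * ((N : ℝ) * (2 * C) ^ 2)) := by
            have h1N : (1:ℝ) ≤ (N:ℝ) := by exact_mod_cast hN
            nlinarith [sq_nonneg (2*C)]
  -- W is Lipschitz on compacts
  have hWlip : ∀ r : ℝ, 0 < r → ∃ L : NNReal, LipschitzOnWith L W (Set.Icc 0 r) := by
    intro r hr
    obtain ⟨C, hC0, hC⟩ := hbd r hr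
    choose K hK using fun i => hLip i r hr
    set B : ℝ := C + ‖xb‖ with hB
    have hB0 : 0 ≤ B := by positivity
    set L : ℝ := 2 * B * ∑ i : Fin N, (K i : ℝ) with hL
    have hL0 : 0 ≤ L := by positivity
    refine ⟨Real.toNNReal L, LipschitzOnWith.of_dist_le_mul fun u hu w hw => ?_⟩
    have hBnd : ∀ i, ∀ z ∈ Set.Icc (0:ℝ) r, ‖x i z - xb‖ ≤ B := by
      intro i z hz
      exact le_trans (norm_sub_le _ _) (add_le_add_left (hC i z hz) _)
    have hterm : ∀ i : Fin N, |‖x i u - xb‖ ^ 2 - ‖x i w - xb‖ ^ 2|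
        ≤ (2 * B) * ((K i : ℝ) * dist u w) := by
      intro i
      have h1 : |‖x i u - xb‖ - ‖x i w - xb‖| ≤ ‖x i u - x i w‖ := by
        have := abs_norm_sub_norm_le (x i u - xb) (x i w - xb)
        rwa [sub_sub_sub_cancel_right] at this
      have h2 : ‖x i u - x i w‖ ≤ (K i : ℝ) * dist u w := by
        have := (hK i).dist_le_mul u hu w hw
        rwa [dist_eq_norm] at this
      have h3 : ‖x i u - xb‖ + ‖x i w - xb‖ ≤ 2 * B := by
        have := hBnd i u hu
        have := hBnd i w hw
        linarith
      have h4 : |‖x i u - xb‖ ^ 2 - ‖x i w - xb‖ ^ 2|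
          = |‖x i u - xb‖ - ‖x i w - xb‖| * (‖x i u - xb‖ + ‖x i w - xb‖) := by
        rw [← abs_of_nonneg (by positivity : (0:ℝ) ≤ ‖x i u - xb‖ + ‖x i w - xb‖), ← abs_mul]
        congr 1
        ring
      rw [h4]
      have h5 : (0:ℝ) ≤ ‖x i u - xb‖ + ‖x i w - xb‖ := by positivity
      calc |‖x i u - xb‖ - ‖x i w - xb‖| * (‖x i u - xb‖ + ‖x i w - xb‖)
          ≤ ((K i : ℝ) * dist u w) * (2 * B) := by
            apply mul_le_mul (le_trans h1 h2) h3 h5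
            positivity
        _ = (2 * B) * ((K i : ℝ) * dist u w) := by ring
    calc dist (W u) (W w) = |W u - W w| := Real.dist_eq _ _
      _ = |∑ i : Fin N, (‖x i u - xb‖ ^ 2 - ‖x i w - xb‖ ^ 2)| := by
          rw [hW, Finset.sum_sub_distrib]
      _ ≤ ∑ i : Fin N, |‖x i u - xb‖ ^ 2 - ‖x i w - xb‖ ^ 2| :=
          Finset.abs_sum_le_sum_abs _ _
      _ ≤ ∑ i : Fin N, (2 * B) * ((K i : ℝ) * dist u w) := Finset.sum_le_sum fun i _ => hterm i
      _ = L * dist u w := by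
          have hre : ∀ i : Fin N, (2 * B) * ((K i : ℝ) * dist u w)
              = (2 * B * (K i : ℝ)) * dist u w := fun i => by ring
          simp only [hre]
          rw [← Finset.sum_mul, hL, ← Finset.mul_sum]
      _ ≤ (Real.toNNReal L : ℝ) * dist u w :=
          mul_le_mul_of_nonneg_right (Real.le_coe_toNNReal L) dist_nonneg
  -- FTC for W
  have hFTCW : ∀ t₁ t₂ : ℝ, 0 ≤ t₁ → t₁ ≤ t₂ → W t₂ - W t₁ = -∫ s in t₁..t₂, D s := by
    intro t₁ t₂ h1 h12
    have h2 : (0:ℝ) ≤ t₂ := le_trans h1 h12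
    have h2p : (0:ℝ) < t₂ + 1 := by linarith
    obtain ⟨L, hL⟩ := hWlip (t₂ + 1) h2p
    have hder : ∀ᵐ s ∂(MeasureTheory.volume : MeasureTheory.Measure ℝ),
        s ∈ Set.Ioo t₁ t₂ → HasDerivAt W (-D s) s := by
      filter_upwards [haeW] with s hs hmem
      exact hs (lt_of_le_of_lt h1 hmem.1)
    have hres := ftc_ae_aux h12 (K := L) (hL.mono (Set.Icc_subset_Icc h1 le_rfl)) hder
    rw [hres, intervalIntegral.integral_neg]
  -- W is nonneg and nonincreasing
  have hWnn : ∀ s : ℝ, 0 ≤ W s := by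
    intro s
    exact Finset.sum_nonneg fun i _ => by positivity
  have hWmono : ∀ t₁ t₂ : ℝ, 0 ≤ t₁ → t₁ ≤ t₂ → W t₂ ≤ W t₁ := by
    intro t₁ t₂ h1 h12
    have h := hFTCW t₁ t₂ h1 h12
    have : 0 ≤ ∫ s in t₁..t₂, D s :=
      intervalIntegral.integral_nonneg h12 fun u hu => hDnn u (le_trans h1 hu.1)
    linarith
  -- W stays positive
  have hWpos : ∀ t : ℝ, 0 ≤ t → 0 < W t := by
    have hW0 : 0 < W 0 := by
      have h := hmVarW 0 le_rfl
      rw [h] at hV0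
      nlinarith [hNinv]
    have hstep : ∀ s : ℝ, 0 ≤ s → W s / 2 ≤ W (s + 8⁻¹) := by
      intro s hs
      have h8 : (0:ℝ) < 8⁻¹ := by norm_num
      have hid := hFTCW s (s + 8⁻¹) hs (by linarith)
      have hbound : (∫ u in s..s + 8⁻¹, D u) ≤ ∫ _u in s..s + 8⁻¹, (4 * W s) := by
        apply intervalIntegral.integral_mono_on (by linarith)
          (hDint s (s + 8⁻¹) hs (by linarith)) intervalIntegrable_const
        intro u hu
        have hu0 : 0 ≤ u := le_trans hs hu.1
        have := hWmono s u hs hu.1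
        have := hD4W u hu0
        linarith
      rw [intervalIntegral.integral_const] at hbound
      have : (s + 8⁻¹ - s) • (4 * W s) = W s / 2 := by
        rw [smul_eq_mul]
        ring
      rw [this] at hbound
      linarith
    have hiter : ∀ n : ℕ, W 0 / 2 ^ n ≤ W (n * 8⁻¹) := by
      intro n
      induction n with
      | zero => simp
      | succ n ih =>
        have hn8 : (0:ℝ) ≤ n * 8⁻¹ := by positivity
        have hs := hstep (n * 8⁻¹) hn8
        have hcast : ((n + 1 : ℕ) : ℝ) * 8⁻¹ = n * 8⁻¹ + 8⁻¹ := by push_cast; ring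
        rw [hcast]
        have he : W 0 / 2 ^ (n + 1) = (W 0 / 2 ^ n) / 2 := by
          rw [pow_succ]; ring
        rw [he]
        linarith
    intro t ht
    set n : ℕ := ⌈8 * t⌉₊ with hn
    have h1 : 8 * t ≤ n := Nat.le_ceil _
    have h2 : t ≤ n * 8⁻¹ := by linarith
    have h3 : 0 < W 0 / 2 ^ n := by positivity
    calc (0:ℝ) < W 0 / 2 ^ n := h3
      _ ≤ W (n * 8⁻¹) := hiter n
      _ ≤ W t := hWmono t (n * 8⁻¹) ht h2
  -- strict decrease of the dissipation integral over each window
  have hIpos : ∀ t : ℝ, 0 ≤ t → 0 < ∫ s in t..t + τ, D s := by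
    intro t ht
    have htτ : t ≤ t + τ := by linarith
    have hInn : 0 ≤ ∫ s in t..t + τ, D s :=
      intervalIntegral.integral_nonneg htτ fun u hu => hDnn u (le_trans ht hu.1)
    rcases hInn.lt_or_eq with hlt | heq
    · exact hlt
    exfalso
    -- the dissipation vanishes a.e. on the window
    have hintD : MeasureTheory.IntegrableOn D (Set.Ioc t (t + τ)) MeasureTheory.volume := by
      have h := hDint t (t + τ) ht htτ
      rwa [intervalIntegrable_iff_integrableOn_Ioc_of_le htτ] at h
    have hnnae : 0 ≤ᵐ[(MeasureTheory.volume : MeasureTheory.Measure ℝ).restrict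
        (Set.Ioc t (t + τ))] D :=
      (MeasureTheory.ae_restrict_iff' measurableSet_Ioc).2
        (Filter.Eventually.of_forall fun s hs => hDnn s (le_trans ht hs.1.le))
    have hIzero : ∫ s in Set.Ioc t (t + τ), D s = 0 := by
      rw [← intervalIntegral.integral_of_le htτ]
      exact heq.symm
    have hD0 := (MeasureTheory.integral_eq_zero_iff_of_nonneg_ae hnnae hintD).1 hIzero
    -- hence all velocities vanish a.e. on the window
    have hvz : ∀ᵐ s ∂(MeasureTheory.volume : MeasureTheory.Measure ℝ).restrict
        (Set.Ioc t (t + τ)), ∀ i, v i s = 0 := by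
      filter_upwards [hD0, MeasureTheory.ae_restrict_mem measurableSet_Ioc] with s hDs hsmem
      have hs0 : (0:ℝ) ≤ s := le_trans ht hsmem.1.le
      have hDs' : D s = 0 := hDs
      have hsum : ∑ i : Fin N, ∑ j : Fin N, a i j s * ‖x i s - x j s‖ ^ 2 = 0 := by
        have hmul : (N:ℝ)⁻¹ * ∑ i : Fin N, ∑ j : Fin N, a i j s * ‖x i s - x j s‖ ^ 2 = 0 :=
          hDs'
        rcases mul_eq_zero.1 hmul with h0 | h0
        · exact absurd h0 (ne_of_gt hNinv)
        · exact h0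
      have hterm : ∀ i j : Fin N, a i j s * ‖x i s - x j s‖ ^ 2 = 0 := by
        intro i j
        have houter := (Finset.sum_eq_zero_iff_of_nonneg fun i _ =>
          Finset.sum_nonneg fun j _ => mul_nonneg (ha0 i j s hs0) (by positivity)).1 hsum
            i (Finset.mem_univ i)
        exact (Finset.sum_eq_zero_iff_of_nonneg fun j _ =>
          mul_nonneg (ha0 i j s hs0) (by positivity)).1 houter j (Finset.mem_univ j)
      intro i
      have hz : ∀ j : Fin N, a i j s • (x j s - x i s) = 0 := by
        intro j
        rcases mul_eq_zero.1 (hterm i j) with h0 | h0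
        · rw [h0, zero_smul]
        · have hn0 : ‖x i s - x j s‖ = 0 := sq_eq_zero_iff.1 h0
          have hxij : x i s - x j s = 0 := norm_eq_zero.1 hn0
          have hxji : x j s - x i s = 0 := by
            have h' := neg_eq_zero.2 hxij
            rwa [neg_sub] at h'
          rw [hxji, smul_zero]
      show (N : ℝ)⁻¹ • ∑ j : Fin N, a i j s • (x j s - x i s) = 0
      rw [Finset.sum_eq_zero fun j _ => hz j, smul_zero]
    -- hence the configuration is frozen on the window
    have hxconst : ∀ s ∈ Set.Icc t (t + τ), ∀ i, x i s = x i t := by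
      intro s hs i
      have hss : t ≤ s := hs.1
      have hInt : (∫ u in t..s, v i u) = 0 := by
        have hsub : Set.Ioc t s ⊆ Set.Ioc t (t + τ) := Set.Ioc_subset_Ioc le_rfl hs.2
        have hae := MeasureTheory.ae_restrict_of_ae_restrict_of_subset hsub hvz
        have hae2 : ∀ᵐ u ∂(MeasureTheory.volume : MeasureTheory.Measure ℝ),
            u ∈ Set.uIoc t s → v i u = (fun _ => (0 : EuclideanSpace ℝ (Fin d))) u := by
          rw [Set.uIoc_of_le hss]
          have h' := (MeasureTheory.ae_restrict_iff' measurableSet_Ioc).1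
            (by filter_upwards [hae] with u hu using hu i)
          filter_upwards [h'] with u hu humem
          exact hu humem
        rw [intervalIntegral.integral_congr_ae hae2, intervalIntegral.integral_zero]
      have h := hFTCx i t s ht hss
      rw [hInt] at h
      exact sub_eq_zero.1 h
    -- integrability of the pairwise dissipation terms
    have haint : ∀ i j : Fin N,
        IntervalIntegrable (fun s => a i j s * ‖x i s - x j s‖ ^ 2)
          MeasureTheory.volume t (t + τ) := by
      intro i j
      have h2 : (0:ℝ) < t + τ := by linarith
      obtain ⟨C, hC0, hC⟩ := hbd (t + τ) h2
      have hsub : Set.Ioc t (t + τ) ⊆ Set.Icc 0 (t + τ) :=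
        fun s hs => ⟨le_trans ht hs.1.le, hs.2⟩
      have hmono2 : (MeasureTheory.volume : MeasureTheory.Measure ℝ).restrict
          (Set.Ioc t (t + τ)) ≤ (MeasureTheory.volume : MeasureTheory.Measure ℝ).restrict
          (Set.Icc 0 (t + τ)) := MeasureTheory.Measure.restrict_mono hsub le_rfl
      refine intervalIntegrable_of_bdd (C := (2 * C) ^ 2) htτ ?_ ?_
      · refine MeasureTheory.AEStronglyMeasurable.mul
          ((hameas i j).aestronglyMeasurable.restrict) ?_
        have hcn : ContinuousOn (fun s => ‖x i s - x j s‖ ^ 2) (Set.Icc 0 (t + τ)) :=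
          (((hcont i (t + τ) h2).sub (hcont j (t + τ) h2)).norm).pow 2
        exact (hcn.aestronglyMeasurable measurableSet_Icc).mono_measure hmono2
      · intro s hs
        have hsmem : s ∈ Set.Icc (0:ℝ) (t + τ) := hsub hs
        have hs0 : (0:ℝ) ≤ s := hsmem.1
        have hsubnorm : ‖x i s - x j s‖ ≤ 2 * C :=
          le_trans (norm_sub_le _ _) (by linarith [hC i s hsmem, hC j s hsmem])
        rw [Real.norm_eq_abs, abs_of_nonneg (mul_nonneg (ha0 i j s hs0) (by positivity))]
        calc a i j s * ‖x i s - x j s‖ ^ 2 ≤ 1 * (2 * C) ^ 2 :=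
            mul_le_mul (ha1 i j s hs0) (by nlinarith [norm_nonneg (x i s - x j s)])
              (by positivity) one_pos.le
          _ = (2 * C) ^ 2 := one_mul _
    -- the averaged matrix annihilates the frozen configuration
    have hswap : ∑ i : Fin N, ∑ j : Fin N,
        (∫ s in t..t + τ, a i j s * ‖x i s - x j s‖ ^ 2) = 0 := by
      have hrow : ∀ i : Fin N,
          ∑ j : Fin N, (∫ s in t..t + τ, a i j s * ‖x i s - x j s‖ ^ 2)
          = ∫ s in t..t + τ, ∑ j : Fin N, a i j s * ‖x i s - x j s‖ ^ 2 :=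
        fun i => (intervalIntegral.integral_finset_sum fun j _ => haint i j).symm
      calc ∑ i : Fin N, ∑ j : Fin N, (∫ s in t..t + τ, a i j s * ‖x i s - x j s‖ ^ 2)
          = ∑ i : Fin N, ∫ s in t..t + τ, ∑ j : Fin N, a i j s * ‖x i s - x j s‖ ^ 2 :=
            Finset.sum_congr rfl fun i _ => hrow i
        _ = ∫ s in t..t + τ, ∑ i : Fin N, ∑ j : Fin N, a i j s * ‖x i s - x j s‖ ^ 2 := by
            have hsumint : ∀ i : Fin N, IntervalIntegrable
                (fun s => ∑ j : Fin N, a i j s * ‖x i s - x j s‖ ^ 2)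
                MeasureTheory.volume t (t + τ) := by
              intro i
              have h2 := IntervalIntegrable.sum (μ := MeasureTheory.volume) (a := t) (b := t + τ)
                (f := fun j => fun s => a i j s * ‖x i s - x j s‖ ^ 2) Finset.univ
                (fun j _ => haint i j)
              have he : (∑ j : Fin N, fun s => a i j s * ‖x i s - x j s‖ ^ 2)
                  = fun s => ∑ j : Fin N, a i j s * ‖x i s - x j s‖ ^ 2 := by
                funext s; simp [Finset.sum_apply]
              rwa [he] at h2
            rw [intervalIntegral.integral_finset_sum
              (f := fun i s => ∑ j : Fin N, a i j s * ‖x i s - x j s‖ ^ 2)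
              (fun i _ => hsumint i)]
        _ = ∫ s in t..t + τ, (N : ℝ) * D s := by
            apply intervalIntegral.integral_congr
            intro s _
            show (∑ i : Fin N, ∑ j : Fin N, a i j s * ‖x i s - x j s‖ ^ 2) = (N : ℝ) * D s
            have hDdef : D s = (N:ℝ)⁻¹ * ∑ i : Fin N, ∑ j : Fin N,
                a i j s * ‖x i s - x j s‖ ^ 2 := rfl
            rw [hDdef, ← mul_assoc, mul_inv_cancel₀ (ne_of_gt hNpos), one_mul]
        _ = (N : ℝ) * ∫ s in t..t + τ, D s := intervalIntegral.integral_const_mul _ _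
        _ = 0 := by rw [← heq, mul_zero]
    have hAzero : ∑ i : Fin N, ∑ j : Fin N,
        (τ⁻¹ * ∫ s in t..t + τ, a i j s) * ‖x i t - x j t‖ ^ 2 = 0 := by
      have hconst : ∀ i j : Fin N, (∫ s in t..t + τ, a i j s) * ‖x i t - x j t‖ ^ 2
          = ∫ s in t..t + τ, a i j s * ‖x i s - x j s‖ ^ 2 := by
        intro i j
        rw [← intervalIntegral.integral_mul_const]
        apply intervalIntegral.integral_congr
        intro s hs
        rw [Set.uIcc_of_le htτ] at hs
        show a i j s * ‖x i t - x j t‖ ^ 2 = a i j s * ‖x i s - x j s‖ ^ 2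
        rw [hxconst s hs i, hxconst s hs j]
      calc ∑ i : Fin N, ∑ j : Fin N, (τ⁻¹ * ∫ s in t..t + τ, a i j s) * ‖x i t - x j t‖ ^ 2
          = τ⁻¹ * ∑ i : Fin N, ∑ j : Fin N,
              (∫ s in t..t + τ, a i j s) * ‖x i t - x j t‖ ^ 2 := by
            simp only [mul_assoc, ← Finset.mul_sum]
        _ = τ⁻¹ * ∑ i : Fin N, ∑ j : Fin N,
              (∫ s in t..t + τ, a i j s * ‖x i s - x j s‖ ^ 2) := by
            congr 1
            exact Finset.sum_congr rfl fun i _ => Finset.sum_congr rfl fun j _ => hconst i j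
        _ = 0 := by rw [hswap, mul_zero]
    -- contradiction with connectivity persistence
    have hmpos : 0 < mVar (fun i => x i t) := by
      rw [hmVarW t ht]
      exact mul_pos hNinv (hWpos t ht)
    have hle : lambda2 d (fun i j => τ⁻¹ * ∫ s in t..t + τ, a i j s) ≤ 0 := by
      rw [lambda2]
      apply Real.sSup_le _ le_rfl
      intro lam hlamS
      have hxlam := hlamS (fun i => x i t)
      rw [hAzero, mul_zero] at hxlam
      nlinarith [hmpos, hxlam]
    have hμle := hlam t ht
    have hμpos := hμ.1
    linarith
  -- conclusion
  intro t ht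
  have htτ : 0 ≤ t + τ := by linarith
  rw [hmVarW t ht, hmVarW (t + τ) htτ]
  have h := hFTCW t (t + τ) ht (by linarith)
  have h2 := hIpos t ht
  have : W (t + τ) < W t := by linarith
  exact mul_lt_mul_of_pos_left this hNinv
end
end

section
/- Let x(·) be a solution of the linear balanced multiagent system driven by a signal A(·), let t ≥ 0, τ > 0, μ ∈ (0,1], and suppose that all positions are constant on [t, t+τ] and that the algebraic connectivity of the averaged matrix satisfies λ₂((1/τ)∫_t^{t+τ} A(s) ds) ≥ μ. Then V(x(t+τ)) ≤ (1 − τμ) V(x(t)). -/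
open MeasureTheory Finset

noncomputable section

lemma quad_form_zero_of_balanced {N d : ℕ} (A : Fin N → Fin N → ℝ)
    (y : Fin N → EuclideanSpace ℝ (Fin d)) (hbal : IsBalanced A)
    (h0 : ∀ i, ∑ j : Fin N, A i j • (y j - y i) = (0 : EuclideanSpace ℝ (Fin d))) :
    ∑ i : Fin N, ∑ j : Fin N, A i j * ‖y i - y j‖ ^ 2 = 0 := by
  have key : ∀ i, ∑ j : Fin N, A i j * ((inner ℝ (y j) (y i) : ℝ) - ‖y i‖ ^ 2) = 0 := by
    intro i
    have h := congrArg (fun v : EuclideanSpace ℝ (Fin d) => (inner ℝ v (y i) : ℝ)) (h0 i)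
    simp only [inner_zero_left, sum_inner, real_inner_smul_left, inner_sub_left,
      real_inner_self_eq_norm_sq] at h
    simpa using h
  have hsum : ∑ i : Fin N, ∑ j : Fin N, A i j * (inner ℝ (y i) (y j) : ℝ)
      = ∑ i : Fin N, ∑ j : Fin N, A i j * ‖y i‖ ^ 2 := by
    have := Finset.sum_congr rfl (fun i (_ : i ∈ Finset.univ) => key i)
    have h2 : ∑ i : Fin N, ∑ j : Fin N, A i j * ((inner ℝ (y j) (y i) : ℝ) - ‖y i‖ ^ 2) = 0 := by
      rw [Finset.sum_congr rfl (fun i _ => key i)]; simp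
    have h3 : ∑ i : Fin N, ∑ j : Fin N, A i j * (inner ℝ (y j) (y i) : ℝ)
        - ∑ i : Fin N, ∑ j : Fin N, A i j * ‖y i‖ ^ 2 = 0 := by
      rw [← Finset.sum_sub_distrib]
      rw [← h2]
      congr 1; funext i
      rw [← Finset.sum_sub_distrib]
      congr 1; funext j; ring
    have h4 : ∑ i : Fin N, ∑ j : Fin N, A i j * (inner ℝ (y i) (y j) : ℝ)
        = ∑ i : Fin N, ∑ j : Fin N, A i j * (inner ℝ (y j) (y i) : ℝ) := by
      congr 1; funext i; congr 1; funext j; rw [real_inner_comm]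
    linarith [sub_eq_zero.mp h3, h4.ge, h4.le]
  have hbalsum : ∑ i : Fin N, ∑ j : Fin N, A i j * ‖y j‖ ^ 2
      = ∑ i : Fin N, ∑ j : Fin N, A i j * ‖y i‖ ^ 2 := by
    rw [Finset.sum_comm]
    have : ∀ j, ∑ i : Fin N, A i j * ‖y j‖ ^ 2 = ∑ i : Fin N, A j i * ‖y j‖ ^ 2 := by
      intro j
      rw [← Finset.sum_mul, ← Finset.sum_mul, ← hbal j]
    exact Finset.sum_congr rfl (fun j _ => this j)
  have hexp : ∑ i : Fin N, ∑ j : Fin N, A i j * ‖y i - y j‖ ^ 2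
      = ∑ i : Fin N, ∑ j : Fin N, A i j * (‖y i‖ ^ 2 - 2 * (inner ℝ (y i) (y j) : ℝ) + ‖y j‖ ^ 2) := by
    congr 1; funext i; congr 1; funext j
    rw [norm_sub_sq_real]
  rw [hexp]
  have expand : ∑ i : Fin N, ∑ j : Fin N, A i j * (‖y i‖ ^ 2 - 2 * (inner ℝ (y i) (y j) : ℝ) + ‖y j‖ ^ 2)
      = ∑ i : Fin N, ∑ j : Fin N, A i j * ‖y i‖ ^ 2
        - 2 * ∑ i : Fin N, ∑ j : Fin N, A i j * (inner ℝ (y i) (y j) : ℝ)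
        + ∑ i : Fin N, ∑ j : Fin N, A i j * ‖y j‖ ^ 2 := by
    simp only [mul_sub, mul_add, Finset.sum_add_distrib, Finset.sum_sub_distrib,
      Finset.mul_sum, mul_left_comm]
  rw [expand, hbalsum, hsum]; ring

set_option maxHeartbeats 1000000 in
/-- if all agents of a solution of the linear balanced system are stationary
on `[t, t+τ]` and the averaged matrix over this window has algebraic connectivity at least
`μ`, then `V(x(t+τ)) ≤ (1 − τμ) V(x(t))`. -/
theorem stationary_window_variance_contraction {N d : ℕ} (hN : 1 ≤ N)
    (a : Fin N → Fin N → ℝ → ℝ) (ha : ValidSignal N a)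
    (hbal : ∀ᵐ s ∂(volume : Measure ℝ), 0 ≤ s → IsBalanced (fun i j => a i j s))
    (x : Fin N → ℝ → EuclideanSpace ℝ (Fin d)) (hx : IsLinSol a x)
    (t τ μ : ℝ) (ht : 0 ≤ t) (hτ : 0 < τ) (hμ : μ ∈ Set.Ioc (0 : ℝ) 1)
    (hstat : ∀ i : Fin N, ∀ s ∈ Set.Icc t (t + τ), x i s = x i t)
    (hlam : μ ≤ lambda2 d (fun i j => τ⁻¹ * ∫ s in t..t + τ, a i j s)) :
    mVar (fun i => x i (t + τ)) ≤ (1 - τ * μ) * mVar (fun i => x i t) := by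
  classical
  have hNpos : (0 : ℝ) < N := by exact_mod_cast hN
  set y : Fin N → EuclideanSpace ℝ (Fin d) := fun i => x i t with hy
  have hxend : (fun i => x i (t + τ)) = y := by
    funext i; exact hstat i (t + τ) ⟨by linarith, le_rfl⟩
  rw [hxend]
  -- a.e. on the window, the derivative is 0 and equals the RHS
  have hae : ∀ᵐ s ∂(volume : Measure ℝ), s ∈ Set.Ioo t (t + τ) →
      ∑ i : Fin N, ∑ j : Fin N, a i j s * ‖y i - y j‖ ^ 2 = 0 := by
    filter_upwards [hbal, hx.2] with s hb hd hs
    have hs0 : (0 : ℝ) ≤ s := le_trans ht hs.1.le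
    have hb' := hb hs0
    have hd' := hd hs0
    have h0 : ∀ i, ∑ j : Fin N, a i j s • (y j - y i) = (0 : EuclideanSpace ℝ (Fin d)) := by
      intro i
      have hconst : HasDerivAt (x i) 0 s := by
        have hnhds : Set.Icc t (t + τ) ∈ nhds s :=
          mem_nhds_iff.mpr ⟨Set.Ioo t (t + τ), Set.Ioo_subset_Icc_self, isOpen_Ioo, hs⟩
        have heq : x i =ᶠ[nhds s] fun _ => x i t :=
          Filter.eventually_iff_exists_mem.mpr ⟨_, hnhds, fun u hu => hstat i u hu⟩
        exact (hasDerivAt_const s (x i t)).congr_of_eventuallyEq heq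
      have huniq := (hd' i).unique hconst
      have hmem : s ∈ Set.Icc t (t + τ) := Set.Ioo_subset_Icc_self hs
      have hrw : ∑ j : Fin N, a i j s • (x j s - x i s)
          = ∑ j : Fin N, a i j s • (y j - y i) := by
        congr 1; funext j; rw [hstat j s hmem, hstat i s hmem]
      rw [hrw] at huniq
      have hNne : ((N : ℝ)⁻¹ : ℝ) ≠ 0 := inv_ne_zero (ne_of_gt hNpos)
      exact (smul_eq_zero.mp huniq).resolve_left hNne
    exact quad_form_zero_of_balanced (fun i j => a i j s) y hb' h0
  -- integrability of each a i j on the window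
  have htlt : t < t + τ := by linarith
  have hint : ∀ i j, IntervalIntegrable (a i j) volume t (t + τ) := by
    intro i j
    rw [intervalIntegrable_iff, Set.uIoc_of_le htlt.le]
    refine Measure.integrableOn_of_bounded (M := 1) (by simp) (ha i j).1.aestronglyMeasurable ?_
    rw [ae_restrict_iff' measurableSet_Ioc]
    filter_upwards with s hs
    have hs0 : (0 : ℝ) ≤ s := le_trans ht hs.1.le
    have := (ha i j).2 s hs0
    rw [Real.norm_eq_abs, abs_le]
    exact ⟨by linarith [this.1], this.2⟩
  -- the integral of the quadratic form vanishes
  have hgint : ∫ s in t..t + τ, ∑ i : Fin N, ∑ j : Fin N, a i j s * ‖y i - y j‖ ^ 2 = 0 := by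
    rw [intervalIntegral.integral_of_le htlt.le, MeasureTheory.integral_Ioc_eq_integral_Ioo]
    apply MeasureTheory.integral_eq_zero_of_ae
    have : ∀ᵐ s ∂(volume.restrict (Set.Ioo t (t + τ))),
        ∑ i : Fin N, ∑ j : Fin N, a i j s * ‖y i - y j‖ ^ 2 = 0 := by
      rw [ae_restrict_iff' measurableSet_Ioo]
      filter_upwards [hae] with s hs hmem
      exact hs hmem
    exact this
  have hsplit : ∫ s in t..t + τ, ∑ i : Fin N, ∑ j : Fin N, a i j s * ‖y i - y j‖ ^ 2
      = ∑ i : Fin N, ∑ j : Fin N, (∫ s in t..t + τ, a i j s) * ‖y i - y j‖ ^ 2 := by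
    have hji : ∀ i, IntervalIntegrable (fun s => ∑ j : Fin N, a i j s * ‖y i - y j‖ ^ 2)
        volume t (t + τ) := by
      intro i
      have h := IntervalIntegrable.sum (μ := volume) (a := t) (b := t + τ) Finset.univ
        (f := fun j => fun s => a i j s * ‖y i - y j‖ ^ 2) (fun j _ => (hint i j).mul_const _)
      have he : (∑ j : Fin N, fun s => a i j s * ‖y i - y j‖ ^ 2)
          = fun s => ∑ j : Fin N, a i j s * ‖y i - y j‖ ^ 2 := by
        funext s; simp
      rwa [he] at h
    rw [intervalIntegral.integral_finset_sum (fun i _ => hji i)]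
    refine Finset.sum_congr rfl (fun i _ => ?_)
    rw [intervalIntegral.integral_finset_sum (fun j _ => (hint i j).mul_const _)]
    exact Finset.sum_congr rfl (fun j _ => intervalIntegral.integral_mul_const _ _)
  have hQ : ∑ i : Fin N, ∑ j : Fin N, (τ⁻¹ * ∫ s in t..t + τ, a i j s) * ‖y i - y j‖ ^ 2 = 0 := by
    have : ∑ i : Fin N, ∑ j : Fin N, (τ⁻¹ * ∫ s in t..t + τ, a i j s) * ‖y i - y j‖ ^ 2
        = τ⁻¹ * ∑ i : Fin N, ∑ j : Fin N, (∫ s in t..t + τ, a i j s) * ‖y i - y j‖ ^ 2 := by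
      rw [Finset.mul_sum]
      refine Finset.sum_congr rfl (fun i _ => ?_)
      rw [Finset.mul_sum]
      exact Finset.sum_congr rfl (fun j _ => by ring)
    rw [this, ← hsplit, hgint, mul_zero]
  -- mVar y is nonneg; show it is zero
  have hVnn : 0 ≤ mVar y := by
    unfold mVar
    positivity
  have hV0 : mVar y = 0 := by
    by_contra hne
    have hVpos : 0 < mVar y := lt_of_le_of_ne hVnn (Ne.symm hne)
    have hub : ∀ lam ∈ {lam : ℝ | ∀ z : Fin N → EuclideanSpace ℝ (Fin d),
        lam * mVar z ≤ (2 * (N : ℝ) ^ 2)⁻¹ * ∑ i : Fin N, ∑ j : Fin N,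
          (τ⁻¹ * ∫ s in t..t + τ, a i j s) * ‖z i - z j‖ ^ 2}, lam ≤ 0 := by
      intro lam hlamS
      have := hlamS y
      rw [hQ, mul_zero] at this
      nlinarith
    have hsup : lambda2 d (fun i j => τ⁻¹ * ∫ s in t..t + τ, a i j s) ≤ 0 :=
      Real.sSup_le hub le_rfl
    linarith [hμ.1, le_trans hlam hsup]
  rw [hV0]
  simp
end
end
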